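/- Let R ⊂ ℤ^d be finite with 0 not in the convex hull of R, and let B be a β-recovering cocycle (β < ∞). For the Markov chain Q_u with transitions p(z)e^{-βB(x,x+z)-βV(x,z)}, and x, y with y-x and x-u in the semigroup generated by R, Q_u(X hits x before y and τ_y < ∞, and X_{τ_x:τ_y} = x_{j:k}) equals Q_u(τ_x ≤ τ_y < ∞) times Q^{unr}_{x,y}(X_{0:τ_y} = x_{j:k}), where Q^{unr}_{x,y} is the unrestricted-length point-to-point polymer measure with density e^{-βΣ_{i<τ_y}V(X_i, X_{i+1}-X_i)}1{τ_y<∞} / Z(x→y) with respect to the reference walk started at x. -/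

import Mathlib

open Finset

attribute [local instance] Classical.propDecidable

noncomputable section

/-- Position of an admissible path after `k` steps. -/
def pos {d n : ℕ} (x : Fin d → ℤ) (s : Fin n → (Fin d → ℤ)) (k : ℕ) : Fin d → ℤ :=
  x + ∑ i ∈ Finset.univ.filter (fun i : Fin n => (i : ℕ) < k), s i

/-- Weight of a path: product of kernel factors and Boltzmann factors for the potential. -/
def pathWeight {d n : ℕ} (p : (Fin d → ℤ) → ℝ) (β : ℝ)
    (V : (Fin d → ℤ) → (Fin d → ℤ) → ℝ) (x : Fin d → ℤ)
    (s : Fin n → (Fin d → ℤ)) : ℝ :=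
  ∏ i : Fin n, p (s i) * Real.exp (-β * V (pos x s (i : ℕ)) (s i))

/-- Weight of a path under the cocycle Markov chain. -/
def chainWeight {d n : ℕ} (p : (Fin d → ℤ) → ℝ) (β : ℝ)
    (V B : (Fin d → ℤ) → (Fin d → ℤ) → ℝ) (x : Fin d → ℤ)
    (s : Fin n → (Fin d → ℤ)) : ℝ :=
  ∏ i : Fin n, p (s i) *
    Real.exp (-β * B (pos x s (i : ℕ)) (pos x s ((i : ℕ) + 1)) - β * V (pos x s (i : ℕ)) (s i))

/-- Total weight of the length-`n` admissible paths from `x` first hitting `y` at step `n`. -/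
def firstHitZ {d : ℕ} (R : Finset (Fin d → ℤ)) (p : (Fin d → ℤ) → ℝ) (β : ℝ)
    (V : (Fin d → ℤ) → (Fin d → ℤ) → ℝ) (x y : Fin d → ℤ) (n : ℕ) : ℝ :=
  ∑ s ∈ Fintype.piFinset (fun _ : Fin n => R),
    if pos x s n = y ∧ ∀ k < n, pos x s k ≠ y then pathWeight p β V x s else 0

/-- Unrestricted-length point-to-point partition function `Z(x → y)`. -/
def Zunr {d : ℕ} (R : Finset (Fin d → ℤ)) (p : (Fin d → ℤ) → ℝ) (β : ℝ)
    (V : (Fin d → ℤ) → (Fin d → ℤ) → ℝ) (x y : Fin d → ℤ) : ℝ :=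
  ∑' n : ℕ, firstHitZ R p β V x y n

/-- Chain measure of the event `{τ_x ≤ τ_y < ∞}`: sum over `n` and over paths from `u` which
first hit `y` at time `n` and have visited `x` by then. -/
def QhitBoth {d : ℕ} (R : Finset (Fin d → ℤ)) (p : (Fin d → ℤ) → ℝ) (β : ℝ)
    (V B : (Fin d → ℤ) → (Fin d → ℤ) → ℝ) (u x y : Fin d → ℤ) : ℝ :=
  ∑' n : ℕ, ∑ s ∈ Fintype.piFinset (fun _ : Fin n => R),
    if pos u s n = y ∧ (∀ m < n, pos u s m ≠ y) ∧ ∃ m ≤ n, pos u s m = x then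
      chainWeight p β V B u s
    else 0

/-- Chain measure of the event `{τ_x ≤ τ_y < ∞, X_{τ_x : τ_y} = ξ}`, where `ξ` is a fixed
admissible path from `x` to `y` of length `L` that first reaches `y` at its last step. -/
def QhitSeg {d : ℕ} (R : Finset (Fin d → ℤ)) (p : (Fin d → ℤ) → ℝ) (β : ℝ)
    (V B : (Fin d → ℤ) → (Fin d → ℤ) → ℝ) (u x y : Fin d → ℤ)
    (L : ℕ) (ξ : ℕ → Fin d → ℤ) : ℝ :=
  ∑' n : ℕ, ∑ s ∈ Fintype.piFinset (fun _ : Fin n => R),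
    if pos u s n = y ∧ (∀ m < n, pos u s m ≠ y) ∧
        ∃ jj, jj + L = n ∧ pos u s jj = x ∧ (∀ m < jj, pos u s m ≠ x) ∧
          ∀ i ≤ L, pos u s (jj + i) = ξ i then
      chainWeight p β V B u s
    else 0

section Aux

variable {d : ℕ}

private lemma forall_lt_succ' {P : ℕ → Prop} {n : ℕ} :
    (∀ m < n + 1, P m) ↔ P 0 ∧ ∀ m < n, P (m + 1) := by
  constructor
  · intro h; exact ⟨h 0 (by omega), fun m hm => h (m + 1) (by omega)⟩
  · rintro ⟨h0, h⟩ m hm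
    cases m with
    | zero => exact h0
    | succ m => exact h m (by omega)

lemma pos_zero (x : Fin d → ℤ) {n : ℕ} (s : Fin n → (Fin d → ℤ)) : pos x s 0 = x := by
  simp [pos]

lemma pos_succ (x : Fin d → ℤ) {n : ℕ} (s : Fin n → (Fin d → ℤ)) {k : ℕ} (hk : k < n) :
    pos x s (k + 1) = pos x s k + s ⟨k, hk⟩ := by
  have hins : Finset.univ.filter (fun i : Fin n => (i : ℕ) < k + 1)
      = insert ⟨k, hk⟩ (Finset.univ.filter (fun i : Fin n => (i : ℕ) < k)) := by
    ext i
    simp [Nat.lt_succ_iff_lt_or_eq, Fin.ext_iff, or_comm]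
    omega
  rw [pos, hins, Finset.sum_insert (by simp), pos]
  abel

lemma pos_cons (u z : Fin d → ℤ) {n : ℕ} (t : Fin n → (Fin d → ℤ)) (m : ℕ) :
    pos u (Fin.cons z t) (m + 1) = pos (u + z) t m := by
  simp [pos, Finset.sum_filter, Fin.sum_univ_succ, Nat.succ_lt_succ_iff, add_assoc]

variable (p : (Fin d → ℤ) → ℝ) (β : ℝ) (V B : (Fin d → ℤ) → (Fin d → ℤ) → ℝ)

/-- one-step chain weight -/
def w1 (u z : Fin d → ℤ) : ℝ := p z * Real.exp (-β * B u (u + z) - β * V u z)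

lemma chainWeight_cons (u z : Fin d → ℤ) {n : ℕ} (t : Fin n → (Fin d → ℤ)) :
    chainWeight p β V B u (Fin.cons z t)
      = w1 p β V B u z * chainWeight p β V B (u + z) t := by
  rw [chainWeight, chainWeight, Fin.prod_univ_succ, w1]
  simp only [Fin.cons_zero, Fin.cons_succ, Fin.val_zero, Fin.val_succ, pos_cons, pos_zero,
    zero_add]

lemma sum_piFinset_cons (R : Finset (Fin d → ℤ)) {n : ℕ}
    (f : (Fin (n + 1) → (Fin d → ℤ)) → ℝ) :
    ∑ s ∈ Fintype.piFinset (fun _ : Fin (n + 1) => R), f s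
      = ∑ z ∈ R, ∑ t ∈ Fintype.piFinset (fun _ : Fin n => R), f (Fin.cons z t) := by
  rw [← Finset.sum_product']
  apply Finset.sum_nbij' (i := fun s => (s 0, Fin.tail s))
    (j := fun zt => Fin.cons zt.1 zt.2)
  · intro s hs
    simp only [Fintype.mem_piFinset] at hs
    simp [Finset.mem_product, Fintype.mem_piFinset, Fin.tail, hs]
  · intro zt hzt
    simp only [Finset.mem_product, Fintype.mem_piFinset] at hzt
    simp only [Fintype.mem_piFinset]
    intro i
    refine Fin.cases ?_ ?_ i
    · simpa using hzt.1
    · intro j; simpa using hzt.2 j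
  · intro s _; exact Fin.cons_self_tail s
  · intro zt _; simp
  · intro s _; rw [Fin.cons_self_tail]

lemma B_telescope (hcoc : ∀ u x y : Fin d → ℤ, B u x + B x y = B u y)
    (f : ℕ → (Fin d → ℤ)) (m : ℕ) :
    ∑ i ∈ Finset.range m, B (f i) (f (i + 1)) = B (f 0) (f m) := by
  induction m with
  | zero =>
    have h := hcoc (f 0) (f 0) (f 0)
    simp only [Finset.range_zero, Finset.sum_empty]
    linarith
  | succ m ih =>
    rw [Finset.sum_range_succ, ih]
    exact hcoc _ _ _

lemma chainWeight_eq_pathWeight (hcoc : ∀ u x y : Fin d → ℤ, B u x + B x y = B u y)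
    (u : Fin d → ℤ) {n : ℕ} (s : Fin n → (Fin d → ℤ)) :
    chainWeight p β V B u s
      = Real.exp (-β * B u (pos u s n)) * pathWeight p β V u s := by
  have h1 : chainWeight p β V B u s
      = ∏ i : Fin n, (Real.exp (-β * B (pos u s (i : ℕ)) (pos u s ((i : ℕ) + 1)))
          * (p (s i) * Real.exp (-β * V (pos u s (i : ℕ)) (s i)))) := by
    rw [chainWeight]
    refine Finset.prod_congr rfl fun i _ => ?_
    rw [show -β * B (pos u s (i : ℕ)) (pos u s ((i : ℕ) + 1)) - β * V (pos u s (i : ℕ)) (s i)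
        = (-β * B (pos u s (i : ℕ)) (pos u s ((i : ℕ) + 1)))
          + (-β * V (pos u s (i : ℕ)) (s i)) by ring, Real.exp_add]
    ring
  rw [h1, Finset.prod_mul_distrib, ← Real.exp_sum, pathWeight]
  congr 2
  rw [Fin.sum_univ_eq_sum_range (fun k => -β * B (pos u s k) (pos u s (k + 1))) n,
    ← Finset.mul_sum, B_telescope B hcoc (pos u s) n, pos_zero]

end Aux

section FS

variable {d : ℕ} (R : Finset (Fin d → ℤ)) (p : (Fin d → ℤ) → ℝ) (β : ℝ)
  (V B : (Fin d → ℤ) → (Fin d → ℤ) → ℝ)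

/-- total chain weight of length `n` paths from `u` that hit `t` at time `n` having avoided
`a` and `b` strictly before. -/
def FS (a b t : Fin d → ℤ) (n : ℕ) (u : Fin d → ℤ) : ℝ :=
  ∑ s ∈ Fintype.piFinset (fun _ : Fin n => R),
    if pos u s n = t ∧ ∀ m < n, pos u s m ≠ a ∧ pos u s m ≠ b then
      chainWeight p β V B u s
    else 0

variable (hp : ∀ z ∈ R, 0 < p z)

include hp in
lemma chainWeight_nonneg {n : ℕ} (u : Fin d → ℤ) {s : Fin n → (Fin d → ℤ)}
    (hs : s ∈ Fintype.piFinset (fun _ : Fin n => R)) :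
    0 ≤ chainWeight p β V B u s := by
  refine Finset.prod_nonneg fun i _ => mul_nonneg ?_ (Real.exp_pos _).le
  exact (hp _ ((Fintype.mem_piFinset).1 hs i)).le

include hp in
lemma pathWeight_nonneg {n : ℕ} (u : Fin d → ℤ) {s : Fin n → (Fin d → ℤ)}
    (hs : s ∈ Fintype.piFinset (fun _ : Fin n => R)) :
    0 ≤ pathWeight p β V u s := by
  refine Finset.prod_nonneg fun i _ => mul_nonneg ?_ (Real.exp_pos _).le
  exact (hp _ ((Fintype.mem_piFinset).1 hs i)).le

include hp in
lemma FS_nonneg (a b t : Fin d → ℤ) (n : ℕ) (u : Fin d → ℤ) :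
    0 ≤ FS R p β V B a b t n u := by
  refine Finset.sum_nonneg fun s hs => ?_
  split
  · exact chainWeight_nonneg R p β V B hp u hs
  · exact le_refl 0

lemma sum_singleton_zero (f : (Fin 0 → (Fin d → ℤ)) → ℝ) :
    ∑ s ∈ Fintype.piFinset (fun _ : Fin 0 => R), f s = f Fin.elim0 := by
  have huniv : (Fintype.piFinset fun _ : Fin 0 => R) = {(Fin.elim0 : Fin 0 → Fin d → ℤ)} := by
    ext s
    simp only [Fintype.mem_piFinset, Finset.mem_singleton]
    constructor
    · intro _; exact funext fun i => i.elim0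
    · intro _ i; exact i.elim0
  rw [huniv, Finset.sum_singleton]

lemma FS_zero (a b t : Fin d → ℤ) (u : Fin d → ℤ) :
    FS R p β V B a b t 0 u = if u = t then 1 else 0 := by
  rw [FS, sum_singleton_zero]
  simp [pos_zero, chainWeight]

lemma FS_succ_mem (a b t : Fin d → ℤ) {n : ℕ} {u : Fin d → ℤ} (hu : u = a ∨ u = b) :
    FS R p β V B a b t (n + 1) u = 0 := by
  refine Finset.sum_eq_zero fun s _ => ?_
  rw [if_neg]
  rintro ⟨-, h2⟩
  have h0 := h2 0 (by omega)
  rw [pos_zero] at h0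
  rcases hu with h | h
  · exact h0.1 h
  · exact h0.2 h

lemma FS_succ (a b t : Fin d → ℤ) {n : ℕ} {u : Fin d → ℤ} (hu1 : u ≠ a) (hu2 : u ≠ b) :
    FS R p β V B a b t (n + 1) u
      = ∑ z ∈ R, w1 p β V B u z * FS R p β V B a b t n (u + z) := by
  rw [FS, sum_piFinset_cons]
  refine Finset.sum_congr rfl fun z _ => ?_
  rw [FS, Finset.mul_sum]
  refine Finset.sum_congr rfl fun s _ => ?_
  have hiff : (pos u (Fin.cons z s) (n + 1) = t
        ∧ ∀ m < n + 1, pos u (Fin.cons z s) m ≠ a ∧ pos u (Fin.cons z s) m ≠ b)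
      ↔ (pos (u + z) s n = t ∧ ∀ m < n, pos (u + z) s m ≠ a ∧ pos (u + z) s m ≠ b) := by
    rw [pos_cons, forall_lt_succ']
    constructor
    · rintro ⟨h1, -, h2⟩
      exact ⟨h1, fun m hm => by have := h2 m hm; rwa [pos_cons] at this⟩
    · rintro ⟨h1, h2⟩
      refine ⟨h1, ⟨by rw [pos_zero]; exact ⟨hu1, hu2⟩, fun m hm => ?_⟩⟩
      rw [pos_cons]; exact h2 m hm
  simp only [chainWeight_cons, mul_ite, mul_zero]
  exact if_congr hiff rfl rfl

include hp in
lemma FS_sum_le (hrec : ∀ u : Fin d → ℤ, ∑ z ∈ R, w1 p β V B u z = 1)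
    (a b t : Fin d → ℤ) (ht : t = a ∨ t = b) (N : ℕ) :
    ∀ u : Fin d → ℤ, ∑ j ∈ Finset.range N, FS R p β V B a b t j u ≤ 1 := by
  induction N with
  | zero => intro u; simp
  | succ N ih =>
    intro u
    rw [Finset.sum_range_succ']
    by_cases hu : u = a ∨ u = b
    · have hz : ∀ j ∈ Finset.range N, FS R p β V B a b t (j + 1) u = 0 :=
        fun j _ => FS_succ_mem R p β V B a b t hu
      rw [Finset.sum_congr rfl hz, Finset.sum_const_zero, zero_add, FS_zero]
      split <;> norm_num
    · push_neg at hu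
      have h0 : FS R p β V B a b t 0 u = 0 := by
        rw [FS_zero, if_neg]
        rcases ht with rfl | rfl
        · exact hu.1
        · exact hu.2
      rw [h0, add_zero]
      have hstep : ∀ j ∈ Finset.range N, FS R p β V B a b t (j + 1) u
          = ∑ z ∈ R, w1 p β V B u z * FS R p β V B a b t j (u + z) :=
        fun j _ => FS_succ R p β V B a b t hu.1 hu.2
      rw [Finset.sum_congr rfl hstep, Finset.sum_comm]
      calc ∑ z ∈ R, ∑ j ∈ Finset.range N, w1 p β V B u z * FS R p β V B a b t j (u + z)
          = ∑ z ∈ R, w1 p β V B u z * ∑ j ∈ Finset.range N, FS R p β V B a b t j (u + z) := by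
            refine Finset.sum_congr rfl fun z _ => ?_
            rw [Finset.mul_sum]
        _ ≤ ∑ z ∈ R, w1 p β V B u z * 1 := by
            refine Finset.sum_le_sum fun z hz => ?_
            refine mul_le_mul_of_nonneg_left (ih (u + z)) ?_
            exact mul_nonneg (hp z hz).le (Real.exp_pos _).le
        _ = ∑ z ∈ R, w1 p β V B u z := Finset.sum_congr rfl fun z _ => mul_one _
        _ = 1 := hrec u

include hp in
lemma FS_summable (hrec : ∀ u : Fin d → ℤ, ∑ z ∈ R, w1 p β V B u z = 1)
    (a b t : Fin d → ℤ) (ht : t = a ∨ t = b) (u : Fin d → ℤ) :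
    Summable (fun n => FS R p β V B a b t n u) :=
  summable_of_sum_range_le (fun n => FS_nonneg R p β V B hp a b t n u)
    (fun N => FS_sum_le R p β V B hp hrec a b t ht N u)

end FS

section GH

variable {d : ℕ} (R : Finset (Fin d → ℤ)) (p : (Fin d → ℤ) → ℝ) (β : ℝ)
  (V B : (Fin d → ℤ) → (Fin d → ℤ) → ℝ) (x y : Fin d → ℤ)

lemma chainWeight_zero (u : Fin d → ℤ) (s : Fin 0 → (Fin d → ℤ)) :
    chainWeight p β V B u s = 1 := by simp [chainWeight]

/-- inner sum of `QhitBoth` as a function of the starting point. -/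
def Gf (n : ℕ) (u : Fin d → ℤ) : ℝ :=
  ∑ s ∈ Fintype.piFinset (fun _ : Fin n => R),
    if pos u s n = y ∧ (∀ m < n, pos u s m ≠ y) ∧ ∃ m ≤ n, pos u s m = x then
      chainWeight p β V B u s
    else 0

lemma G_zero (u : Fin d → ℤ) :
    Gf R p β V B x y 0 u = if u = y ∧ u = x then 1 else 0 := by
  rw [Gf, sum_singleton_zero, chainWeight_zero]
  refine if_congr ?_ rfl rfl
  constructor
  · rintro ⟨h1, -, m, hm, hx⟩
    rw [pos_zero] at h1
    have hm0 : m = 0 := by omega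
    subst hm0
    rw [pos_zero] at hx
    exact ⟨h1, hx⟩
  · rintro ⟨h1, h2⟩
    exact ⟨by rw [pos_zero]; exact h1, fun m hm => absurd hm (by omega),
      0, le_refl 0, by rw [pos_zero]; exact h2⟩

lemma G_succ_y (n : ℕ) : Gf R p β V B x y (n + 1) y = 0 := by
  refine Finset.sum_eq_zero fun s _ => ?_
  rw [if_neg]
  rintro ⟨-, h2, -⟩
  exact h2 0 (by omega) (pos_zero y s)

lemma G_succ_x (n : ℕ) :
    Gf R p β V B x y (n + 1) x = FS R p β V B y y y (n + 1) x := by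
  rw [Gf, FS]
  refine Finset.sum_congr rfl fun s _ => if_congr ?_ rfl rfl
  constructor
  · rintro ⟨h1, h2, -⟩
    exact ⟨h1, fun m hm => ⟨h2 m hm, h2 m hm⟩⟩
  · rintro ⟨h1, h2⟩
    exact ⟨h1, fun m hm => (h2 m hm).1, 0, by omega, pos_zero x s⟩

lemma G_succ {n : ℕ} {u : Fin d → ℤ} (hy : u ≠ y) (hx : u ≠ x) :
    Gf R p β V B x y (n + 1) u
      = ∑ z ∈ R, w1 p β V B u z * Gf R p β V B x y n (u + z) := by
  rw [Gf, sum_piFinset_cons]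
  refine Finset.sum_congr rfl fun z _ => ?_
  rw [Gf, Finset.mul_sum]
  refine Finset.sum_congr rfl fun s _ => ?_
  have hiff : (pos u (Fin.cons z s) (n + 1) = y
        ∧ (∀ m < n + 1, pos u (Fin.cons z s) m ≠ y)
        ∧ ∃ m ≤ n + 1, pos u (Fin.cons z s) m = x)
      ↔ (pos (u + z) s n = y ∧ (∀ m < n, pos (u + z) s m ≠ y)
        ∧ ∃ m ≤ n, pos (u + z) s m = x) := by
    constructor
    · rintro ⟨h1, h2, m, hm, hx'⟩
      rw [pos_cons] at h1
      refine ⟨h1, fun m' hm' => by have := h2 (m' + 1) (by omega); rwa [pos_cons] at this, ?_⟩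
      match m with
      | 0 => rw [pos_zero] at hx'; exact absurd hx' hx
      | m + 1 =>
        rw [pos_cons] at hx'
        exact ⟨m, by omega, hx'⟩
    · rintro ⟨h1, h2, m, hm, hx'⟩
      refine ⟨by rw [pos_cons]; exact h1, ?_, m + 1, by omega, by rw [pos_cons]; exact hx'⟩
      intro m' hm'
      match m' with
      | 0 => rw [pos_zero]; exact hy
      | m' + 1 => rw [pos_cons]; exact h2 m' (by omega)
  simp only [chainWeight_cons, mul_ite, mul_zero]
  exact if_congr hiff rfl rfl

lemma G_decomp : ∀ (n : ℕ) (u : Fin d → ℤ),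
    Gf R p β V B x y n u
      = ∑ j ∈ Finset.range (n + 1),
          FS R p β V B x y x j u * FS R p β V B y y y (n - j) x := by
  intro n
  induction n with
  | zero =>
    intro u
    rw [G_zero, Finset.sum_range_one, FS_zero, Nat.sub_zero, FS_zero]
    by_cases h1 : u = x <;> by_cases h2 : x = y <;> simp_all
  | succ n ih =>
    intro u
    rcases eq_or_ne u y with rfl | hy
    · rw [G_succ_y]
      symm
      refine Finset.sum_eq_zero fun j _ => ?_
      match j with
      | 0 =>
        rw [FS_zero]
        by_cases hxy : u = x
        · rw [if_pos hxy, one_mul, Nat.sub_zero,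
            FS_succ_mem R p β V B u u u (Or.inl hxy.symm)]
        · rw [if_neg hxy, zero_mul]
      | j + 1 => rw [FS_succ_mem R p β V B x u x (Or.inr rfl), zero_mul]
    rcases eq_or_ne u x with rfl | hx
    · rw [G_succ_x]
      symm
      rw [Finset.sum_eq_single 0]
      · rw [FS_zero, if_pos rfl, one_mul, Nat.sub_zero]
      · intro j hj hne
        obtain ⟨j', rfl⟩ := Nat.exists_eq_succ_of_ne_zero hne
        rw [FS_succ_mem R p β V B u y u (Or.inl rfl), zero_mul]
      · intro h
        exact absurd (Finset.mem_range.2 (by omega)) h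
    · rw [G_succ R p β V B x y hy hx, Finset.sum_range_succ', FS_zero, if_neg hx, zero_mul,
        add_zero]
      have hstep : ∀ j ∈ Finset.range (n + 1),
          FS R p β V B x y x (j + 1) u * FS R p β V B y y y (n + 1 - (j + 1)) x
            = ∑ z ∈ R, w1 p β V B u z
                * (FS R p β V B x y x j (u + z) * FS R p β V B y y y (n - j) x) := by
        intro j _
        rw [FS_succ R p β V B x y x hx hy, Nat.succ_sub_succ, Finset.sum_mul]
        exact Finset.sum_congr rfl fun z _ => by ring
      rw [Finset.sum_congr rfl hstep, Finset.sum_comm]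
      refine Finset.sum_congr rfl fun z _ => ?_
      rw [← Finset.mul_sum, ih (u + z)]

end GH

section H

variable {d : ℕ} (R : Finset (Fin d → ℤ)) (p : (Fin d → ℤ) → ℝ) (β : ℝ)
  (V B : (Fin d → ℤ) → (Fin d → ℤ) → ℝ) (x y : Fin d → ℤ) (L : ℕ) (ξ : ℕ → Fin d → ℤ)

/-- inner sum of `QhitSeg` as a function of the starting point. -/
def Hf (n : ℕ) (u : Fin d → ℤ) : ℝ :=
  ∑ s ∈ Fintype.piFinset (fun _ : Fin n => R),
    if pos u s n = y ∧ (∀ m < n, pos u s m ≠ y) ∧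
        ∃ jj, jj + L = n ∧ pos u s jj = x ∧ (∀ m < jj, pos u s m ≠ x) ∧
          ∀ i ≤ L, pos u s (jj + i) = ξ i then
      chainWeight p β V B u s
    else 0

/-- the weight of the fixed path `ξ` under the chain. -/
def Wxi : ℝ := ∏ i ∈ Finset.range L, w1 p β V B (ξ i) (ξ (i + 1) - ξ i)

lemma H_zero (hξ0 : ξ 0 = x) (u : Fin d → ℤ) :
    Hf R p β V B x y L ξ 0 u = if u = y ∧ L = 0 ∧ u = x then 1 else 0 := by
  rw [Hf, sum_singleton_zero, chainWeight_zero]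
  refine if_congr ?_ rfl rfl
  constructor
  · rintro ⟨h1, -, jj, hjL, hjx, -, -⟩
    rw [pos_zero] at h1
    have hL : L = 0 := by omega
    have hj : jj = 0 := by omega
    subst hj
    rw [pos_zero] at hjx
    exact ⟨h1, hL, hjx⟩
  · rintro ⟨h1, hL, hx⟩
    refine ⟨by rw [pos_zero]; exact h1, fun m hm => absurd hm (by omega),
      0, by omega, by rw [pos_zero]; exact hx, fun m hm => absurd hm (by omega),
      fun i hi => ?_⟩
    have hi0 : i = 0 := by omega
    subst hi0
    show pos u Fin.elim0 (0 + 0) = ξ 0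
    rw [hξ0]
    rw [show (0 + 0 : ℕ) = 0 from rfl, pos_zero]
    exact hx

lemma H_succ_y (n : ℕ) : Hf R p β V B x y L ξ (n + 1) y = 0 := by
  refine Finset.sum_eq_zero fun s _ => ?_
  rw [if_neg]
  rintro ⟨-, h2, -⟩
  exact h2 0 (by omega) (pos_zero y s)

lemma H_succ {n : ℕ} {u : Fin d → ℤ} (hy : u ≠ y) (hx : u ≠ x) :
    Hf R p β V B x y L ξ (n + 1) u
      = ∑ z ∈ R, w1 p β V B u z * Hf R p β V B x y L ξ n (u + z) := by
  rw [Hf, sum_piFinset_cons]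
  refine Finset.sum_congr rfl fun z _ => ?_
  rw [Hf, Finset.mul_sum]
  refine Finset.sum_congr rfl fun s _ => ?_
  have hiff : (pos u (Fin.cons z s) (n + 1) = y
        ∧ (∀ m < n + 1, pos u (Fin.cons z s) m ≠ y)
        ∧ ∃ jj, jj + L = n + 1 ∧ pos u (Fin.cons z s) jj = x
            ∧ (∀ m < jj, pos u (Fin.cons z s) m ≠ x)
            ∧ ∀ i ≤ L, pos u (Fin.cons z s) (jj + i) = ξ i)
      ↔ (pos (u + z) s n = y ∧ (∀ m < n, pos (u + z) s m ≠ y)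
        ∧ ∃ jj, jj + L = n ∧ pos (u + z) s jj = x ∧ (∀ m < jj, pos (u + z) s m ≠ x)
            ∧ ∀ i ≤ L, pos (u + z) s (jj + i) = ξ i) := by
    constructor
    · rintro ⟨h1, h2, jj, hjL, hjx, hjf, hjm⟩
      rw [pos_cons] at h1
      refine ⟨h1, fun m hm => by have := h2 (m + 1) (by omega); rwa [pos_cons] at this, ?_⟩
      match jj, hjx with
      | 0, hjx => rw [pos_zero] at hjx; exact absurd hjx hx
      | jj + 1, hjx =>
        rw [pos_cons] at hjx
        refine ⟨jj, by omega, hjx,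
          fun m hm => by have := hjf (m + 1) (by omega); rwa [pos_cons] at this,
          fun i hi => ?_⟩
        have := hjm i hi
        rw [show jj + 1 + i = (jj + i) + 1 from by ring, pos_cons] at this
        exact this
    · rintro ⟨h1, h2, jj, hjL, hjx, hjf, hjm⟩
      refine ⟨by rw [pos_cons]; exact h1, ?_, jj + 1, by omega,
        by rw [pos_cons]; exact hjx, ?_, fun i hi => ?_⟩
      · intro m hm
        match m with
        | 0 => rw [pos_zero]; exact hy
        | m + 1 => rw [pos_cons]; exact h2 m (by omega)
      · intro m hm
        match m with
        | 0 => rw [pos_zero]; exact hx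
        | m + 1 => rw [pos_cons]; exact hjf m (by omega)
      · rw [show jj + 1 + i = (jj + i) + 1 from by ring, pos_cons]
        exact hjm i hi
  simp only [chainWeight_cons, mul_ite, mul_zero]
  exact if_congr hiff rfl rfl

lemma Hx_ne {n : ℕ} (hn : n ≠ L) : Hf R p β V B x y L ξ n x = 0 := by
  refine Finset.sum_eq_zero fun s _ => ?_
  rw [if_neg]
  rintro ⟨-, -, jj, hjL, -, hjf, -⟩
  have hj0 : jj = 0 := by
    by_contra h
    exact hjf 0 (by omega) (pos_zero x s)
  omega

/-- steps of the fixed path `ξ`. -/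
def stepsOf (L : ℕ) : Fin L → (Fin d → ℤ) := fun i => ξ ((i : ℕ) + 1) - ξ (i : ℕ)

lemma Hx_eq (hxy : x ≠ y) (hξ0 : ξ 0 = x) (hξL : ξ L = y)
    (hξstep : ∀ i < L, ξ (i + 1) - ξ i ∈ R)
    (hξfirst : ∀ i < L, ξ i ≠ y) :
    Hf R p β V B x y L ξ L x = Wxi p β V B L ξ := by
  have hmem : stepsOf ξ L ∈ Fintype.piFinset (fun _ : Fin L => R) := by
    simp only [Fintype.mem_piFinset]
    intro i
    exact hξstep _ i.2
  have hpos : ∀ i, i ≤ L → pos x (stepsOf ξ L) i = ξ i := by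
    intro i
    induction i with
    | zero => intro _; rw [pos_zero, hξ0]
    | succ i ihh =>
      intro hi
      have hi' : i < L := by omega
      rw [pos_succ x (stepsOf ξ L) hi', ihh (by omega)]
      show ξ i + (ξ (i + 1) - ξ i) = ξ (i + 1)
      abel
  have hcond : ∀ s ∈ Fintype.piFinset (fun _ : Fin L => R),
      ((pos x s L = y ∧ (∀ m < L, pos x s m ≠ y) ∧
        ∃ jj, jj + L = L ∧ pos x s jj = x ∧ (∀ m < jj, pos x s m ≠ x) ∧
          ∀ i ≤ L, pos x s (jj + i) = ξ i) ↔ s = stepsOf ξ L) := by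
    intro s _
    constructor
    · rintro ⟨-, -, jj, hjL, -, hjf, hjm⟩
      have hj0 : jj = 0 := by
        by_contra h
        exact hjf 0 (by omega) (pos_zero x s)
      subst hj0
      funext i
      have h1 := hjm ((i : ℕ) + 1) (by omega)
      have h2 := hjm (i : ℕ) (by omega)
      rw [zero_add] at h1 h2
      rw [pos_succ x s i.2, h2] at h1
      show s i = ξ ((i : ℕ) + 1) - ξ (i : ℕ)
      rw [eq_sub_iff_add_eq, add_comm]
      have : s ⟨(i : ℕ), i.2⟩ = s i := by congr
      rw [this] at h1
      exact h1
    · rintro rfl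
      refine ⟨by rw [hpos L le_rfl, hξL],
        fun m hm => by rw [hpos m (le_of_lt hm)]; exact hξfirst m hm,
        0, by omega, by rw [pos_zero], fun m hm => absurd hm (by omega),
        fun i hi => by rw [zero_add]; exact hpos i hi⟩
  rw [Hf, Finset.sum_congr rfl (fun s hs => if_congr (hcond s hs) rfl rfl),
    Finset.sum_ite_eq' _ (stepsOf ξ L) (chainWeight p β V B x), if_pos hmem]
  have hconv : chainWeight p β V B x (stepsOf ξ L)
      = ∏ k ∈ Finset.range L, (p (ξ (k + 1) - ξ k)
          * Real.exp (-β * B (pos x (stepsOf ξ L) k) (pos x (stepsOf ξ L) (k + 1))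
              - β * V (pos x (stepsOf ξ L) k) (ξ (k + 1) - ξ k))) := by
    rw [chainWeight]
    exact Fin.prod_univ_eq_prod_range
      (fun k => p (ξ (k + 1) - ξ k)
        * Real.exp (-β * B (pos x (stepsOf ξ L) k) (pos x (stepsOf ξ L) (k + 1))
            - β * V (pos x (stepsOf ξ L) k) (ξ (k + 1) - ξ k))) L
  rw [hconv, Wxi]
  refine Finset.prod_congr rfl fun k hk => ?_
  rw [Finset.mem_range] at hk
  rw [hpos k hk.le, hpos (k + 1) hk, w1,
    show ξ k + (ξ (k + 1) - ξ k) = ξ (k + 1) from by abel]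

lemma H_decomp (hξ0 : ξ 0 = x) (hξL : ξ L = y)
    (hξstep : ∀ i < L, ξ (i + 1) - ξ i ∈ R)
    (hξfirst : ∀ i < L, ξ i ≠ y) :
    ∀ (n : ℕ) (u : Fin d → ℤ),
      Hf R p β V B x y L ξ n u
        = if L ≤ n then FS R p β V B x y x (n - L) u * Wxi p β V B L ξ else 0 := by
  intro n
  induction n with
  | zero =>
    intro u
    rw [H_zero R p β V B x y L ξ hξ0]
    by_cases hL : L = 0
    · subst hL
      have hxy0 : x = y := by rw [← hξ0, ← hξL]
      rw [if_pos (le_refl 0), Nat.sub_zero, FS_zero, Wxi, Finset.range_zero,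
        Finset.prod_empty, mul_one]
      refine if_congr ?_ rfl rfl
      constructor
      · rintro ⟨-, -, h⟩; exact h
      · intro h; exact ⟨by rw [h, hxy0], rfl, h⟩
    · rw [if_neg (show ¬ L ≤ 0 from by omega)]
      exact if_neg (fun hcond => hL hcond.2.1)
  | succ n ih =>
    intro u
    rcases eq_or_ne u y with rfl | hy
    · rw [H_succ_y]
      by_cases hL : L ≤ n + 1
      · rw [if_pos hL]
        by_cases hL2 : L = n + 1
        · rw [show n + 1 - L = 0 from by omega, FS_zero, if_neg, zero_mul]
          intro h
          exact hξfirst 0 (by omega) (by rw [hξ0]; exact h.symm)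
        · obtain ⟨j, hj⟩ : ∃ j, n + 1 - L = j + 1 := ⟨n - L, by omega⟩
          rw [hj, FS_succ_mem R p β V B x u x (Or.inr rfl), zero_mul]
      · rw [if_neg hL]
    rcases eq_or_ne u x with rfl | hx
    · by_cases hL : L = n + 1
      · have h1 : Hf R p β V B u y L ξ (n + 1) u = Wxi p β V B L ξ := by
          rw [show n + 1 = L from hL.symm]
          exact Hx_eq R p β V B u y L ξ hy hξ0 hξL hξstep hξfirst
        rw [h1, if_pos (by omega), show n + 1 - L = 0 from by omega, FS_zero, if_pos rfl,
          one_mul]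
      · rw [Hx_ne R p β V B u y L ξ (by omega)]
        by_cases hL2 : L ≤ n + 1
        · rw [if_pos hL2]
          obtain ⟨j, hj⟩ : ∃ j, n + 1 - L = j + 1 := ⟨n - L, by omega⟩
          rw [hj, FS_succ_mem R p β V B u y u (Or.inl rfl), zero_mul]
        · rw [if_neg hL2]
    · rw [H_succ R p β V B x y L ξ hy hx]
      by_cases hL : L ≤ n
      · rw [if_pos (by omega), show n + 1 - L = (n - L) + 1 from by omega,
          FS_succ R p β V B x y x hx hy, Finset.sum_mul]
        refine Finset.sum_congr rfl fun z _ => ?_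
        rw [ih (u + z), if_pos hL, mul_assoc]
      · have hz : ∑ z ∈ R, w1 p β V B u z * Hf R p β V B x y L ξ n (u + z) = 0 :=
          Finset.sum_eq_zero fun z _ => by rw [ih (u + z), if_neg hL, mul_zero]
        rw [hz]
        by_cases hL2 : L = n + 1
        · rw [if_pos (by omega), show n + 1 - L = 0 from by omega, FS_zero, if_neg hx,
            zero_mul]
        · rw [if_neg (by omega)]

end H

section Assemble

variable {d : ℕ} (R : Finset (Fin d → ℤ)) (p : (Fin d → ℤ) → ℝ) (β : ℝ)
  (V B : (Fin d → ℤ) → (Fin d → ℤ) → ℝ) (x y : Fin d → ℤ) (L : ℕ) (ξ : ℕ → Fin d → ℤ)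

lemma stepsOf_mem (hξstep : ∀ i < L, ξ (i + 1) - ξ i ∈ R) :
    stepsOf ξ L ∈ Fintype.piFinset (fun _ : Fin L => R) := by
  simp only [Fintype.mem_piFinset]
  intro i
  exact hξstep _ i.2

lemma pos_stepsOf (hξ0 : ξ 0 = x) : ∀ i, i ≤ L → pos x (stepsOf ξ L) i = ξ i := by
  intro i
  induction i with
  | zero => intro _; rw [pos_zero, hξ0]
  | succ i ihh =>
    intro hi
    have hi' : i < L := by omega
    rw [pos_succ x (stepsOf ξ L) hi', ihh (by omega)]
    show ξ i + (ξ (i + 1) - ξ i) = ξ (i + 1)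
    abel

lemma FS_eq_firstHit (hcoc : ∀ u x y : Fin d → ℤ, B u x + B x y = B u y) (k : ℕ) :
    FS R p β V B y y y k x = Real.exp (-β * B x y) * firstHitZ R p β V x y k := by
  rw [FS, firstHitZ, Finset.mul_sum]
  refine Finset.sum_congr rfl fun s hs => ?_
  by_cases hc : pos x s k = y ∧ ∀ m < k, pos x s m ≠ y
  · rw [if_pos (show pos x s k = y ∧ ∀ m < k, pos x s m ≠ y ∧ pos x s m ≠ y from
      ⟨hc.1, fun m hm => ⟨hc.2 m hm, hc.2 m hm⟩⟩), if_pos hc,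
      chainWeight_eq_pathWeight p β V B hcoc x s, hc.1]
  · rw [if_neg (fun h => hc ⟨h.1, fun m hm => (h.2 m hm).1⟩), if_neg hc, mul_zero]

lemma firstHitZ_nonneg (hp : ∀ z ∈ R, 0 < p z) (k : ℕ) :
    0 ≤ firstHitZ R p β V x y k := by
  refine Finset.sum_nonneg fun s hs => ?_
  split
  · exact pathWeight_nonneg R p β V hp x hs
  · exact le_refl 0

end Assemble


/-- Consistency with the unrestricted-length point-to-point polymer measures: for a
`β`-recovering cocycle `B` in the directed setting, for `u, x, y` and a path `ξ` from `x`
first reaching `y` at its last step,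
`Q_u(τ_x ≤ τ_y < ∞, X_{τ_x:τ_y} = ξ) = Q_u(τ_x ≤ τ_y < ∞) · Q^{unr}_{x,y}(X_{0:τ_y} = ξ)`,
where `Q^{unr}_{x,y}(X_{0:τ_y} = ξ)` is the path weight of `ξ` divided by `Z(x → y)`. -/
theorem cocycle_chain_consistent_with_unrestricted {d : ℕ} (R : Finset (Fin d → ℤ))
    (p : (Fin d → ℤ) → ℝ)
    (hp : ∀ z ∈ R, 0 < p z ∧ p z ≤ 1) (hpsum : ∑ z ∈ R, p z = 1)
    (β : ℝ) (hβ : 0 < β)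
    (hnoLoop : (0 : Fin d → ℝ) ∉
      convexHull ℝ ((fun z : Fin d → ℤ => fun i => (z i : ℝ)) '' (R : Set (Fin d → ℤ))))
    (V B : (Fin d → ℤ) → (Fin d → ℤ) → ℝ)
    (hcoc : ∀ u x y : Fin d → ℤ, B u x + B x y = B u y)
    (hrec : ∀ x : Fin d → ℤ, ∑ z ∈ R, p z * Real.exp (-β * B x (x + z) - β * V x z) = 1)
    (u x y : Fin d → ℤ) (L : ℕ) (ξ : ℕ → Fin d → ℤ)
    (hξ0 : ξ 0 = x) (hξL : ξ L = y)
    (hξstep : ∀ i < L, ξ (i + 1) - ξ i ∈ R)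
    (hξfirst : ∀ i < L, ξ i ≠ y) :
    QhitSeg R p β V B u x y L ξ
      = QhitBoth R p β V B u x y *
        ((∏ i ∈ Finset.range L, p (ξ (i + 1) - ξ i)
            * Real.exp (-β * V (ξ i) (ξ (i + 1) - ξ i))) / Zunr R p β V x y) := by
  have hp' : ∀ z ∈ R, 0 < p z := fun z hz => (hp z hz).1
  have hw1rec : ∀ v : Fin d → ℤ, ∑ z ∈ R, w1 p β V B v z = 1 := fun v => hrec v
  set Pxi : ℝ := ∏ i ∈ Finset.range L, p (ξ (i + 1) - ξ i)
      * Real.exp (-β * V (ξ i) (ξ (i + 1) - ξ i)) with hPxi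
  -- summability of the two first-passage families
  have hSA : Summable (fun j => FS R p β V B x y x j u) :=
    FS_summable R p β V B hp' hw1rec x y x (Or.inl rfl) u
  have hSC : Summable (fun k => FS R p β V B y y y k x) :=
    FS_summable R p β V B hp' hw1rec y y y (Or.inl rfl) x
  -- `QhitBoth` factorizes
  have hQB : QhitBoth R p β V B u x y
      = (∑' j, FS R p β V B x y x j u) * (∑' k, FS R p β V B y y y k x) := by
    have h1 : QhitBoth R p β V B u x y = ∑' n, Gf R p β V B x y n u := rfl
    rw [h1, tsum_congr (fun n => G_decomp R p β V B x y n u)]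
    rw [tsum_mul_tsum_eq_tsum_sum_antidiagonal_of_summable_norm
      (by simpa [Real.norm_eq_abs] using summable_abs_iff.2 hSA)
      (by simpa [Real.norm_eq_abs] using summable_abs_iff.2 hSC)]
    exact tsum_congr fun n =>
      (Finset.Nat.sum_antidiagonal_eq_sum_range_succ_mk
        (fun kl => FS R p β V B x y x kl.1 u * FS R p β V B y y y kl.2 x) n).symm
  -- `QhitSeg` factorizes
  have hQS : QhitSeg R p β V B u x y L ξ
      = (∑' j, FS R p β V B x y x j u) * Wxi p β V B L ξ := by
    have h1 : QhitSeg R p β V B u x y L ξ = ∑' n, Hf R p β V B x y L ξ n u := rfl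
    rw [h1, tsum_congr (fun n => H_decomp R p β V B x y L ξ hξ0 hξL hξstep hξfirst n u)]
    have hinj : Function.Injective (fun j : ℕ => j + L) := fun a b h => by
      simpa using h
    have hres := hinj.tsum_eq (f := fun n =>
      if L ≤ n then FS R p β V B x y x (n - L) u * Wxi p β V B L ξ else 0) ?_
    · rw [← hres, ← tsum_mul_right]
      refine tsum_congr fun j => ?_
      simp [Nat.le_add_left, Nat.add_sub_cancel]
    · intro n hn
      rw [Function.mem_support] at hn
      have hLn : L ≤ n := by
        by_contra h
        exact hn (if_neg h)
      exact ⟨n - L, by show n - L + L = n; omega⟩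
  -- the chain weight of ξ vs its reference weight
  have hWxi : Wxi p β V B L ξ = Real.exp (-β * B x y) * Pxi := by
    have h1 : ∀ i ∈ Finset.range L, w1 p β V B (ξ i) (ξ (i + 1) - ξ i)
        = Real.exp (-β * B (ξ i) (ξ (i + 1)))
          * (p (ξ (i + 1) - ξ i) * Real.exp (-β * V (ξ i) (ξ (i + 1) - ξ i))) := by
      intro i _
      rw [w1, show ξ i + (ξ (i + 1) - ξ i) = ξ (i + 1) from by abel,
        show -β * B (ξ i) (ξ (i + 1)) - β * V (ξ i) (ξ (i + 1) - ξ i)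
          = (-β * B (ξ i) (ξ (i + 1))) + (-β * V (ξ i) (ξ (i + 1) - ξ i)) from by ring,
        Real.exp_add]
      ring
    rw [Wxi, Finset.prod_congr rfl h1, Finset.prod_mul_distrib, ← Real.exp_sum, hPxi,
      ← Finset.mul_sum, B_telescope B hcoc ξ L, hξ0, hξL]
  -- the reference weight of ξ
  have hpw : pathWeight p β V x (stepsOf ξ L) = Pxi := by
    have hconv : pathWeight p β V x (stepsOf ξ L)
        = ∏ k ∈ Finset.range L, (p (ξ (k + 1) - ξ k)
            * Real.exp (-β * V (pos x (stepsOf ξ L) k) (ξ (k + 1) - ξ k))) := by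
      rw [pathWeight]
      exact Fin.prod_univ_eq_prod_range
        (fun k => p (ξ (k + 1) - ξ k)
          * Real.exp (-β * V (pos x (stepsOf ξ L) k) (ξ (k + 1) - ξ k))) L
    rw [hconv, hPxi]
    refine Finset.prod_congr rfl fun k hk => ?_
    rw [Finset.mem_range] at hk
    rw [pos_stepsOf x L ξ hξ0 k hk.le]
  -- positivity of Pxi
  have hPpos : 0 < Pxi := by
    rw [hPxi]
    refine Finset.prod_pos fun i hi => ?_
    exact mul_pos (hp' _ (hξstep i (Finset.mem_range.1 hi))) (Real.exp_pos _)
  -- summability of firstHitZ and value of Zunr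
  have hfH : ∀ k, firstHitZ R p β V x y k
      = Real.exp (β * B x y) * FS R p β V B y y y k x := by
    intro k
    rw [FS_eq_firstHit R p β V B x y hcoc k, ← mul_assoc, ← Real.exp_add,
      show β * B x y + -β * B x y = 0 from by ring, Real.exp_zero, one_mul]
  have hSfH : Summable (fun k => firstHitZ R p β V x y k) :=
    (hSC.mul_left (Real.exp (β * B x y))).congr (fun k => (hfH k).symm)
  have hZ : Zunr R p β V x y = Real.exp (β * B x y) * ∑' k, FS R p β V B y y y k x := by
    rw [Zunr, tsum_congr hfH, tsum_mul_left]
  -- Zunr is positive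
  have hfHL : Pxi ≤ firstHitZ R p β V x y L := by
    have hterm : (if pos x (stepsOf ξ L) L = y ∧ ∀ k < L, pos x (stepsOf ξ L) k ≠ y then
        pathWeight p β V x (stepsOf ξ L) else 0) = Pxi := by
      rw [if_pos ⟨by rw [pos_stepsOf x L ξ hξ0 L le_rfl, hξL],
        fun k hk => by rw [pos_stepsOf x L ξ hξ0 k hk.le]; exact hξfirst k hk⟩, hpw]
    rw [firstHitZ, ← hterm]
    refine Finset.single_le_sum
      (f := fun s => if pos x s L = y ∧ ∀ k < L, pos x s k ≠ y then
        pathWeight p β V x s else 0)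
      (fun s hs => ?_) (stepsOf_mem R L ξ hξstep)
    split
    · exact pathWeight_nonneg R p β V hp' x hs
    · exact le_refl 0
  have hZpos : 0 < Zunr R p β V x y := by
    have h2 : firstHitZ R p β V x y L ≤ Zunr R p β V x y :=
      Summable.le_tsum hSfH L (fun j _ => firstHitZ_nonneg R p β V x y hp' j)
    linarith
  -- final algebra
  have hSCval : (∑' k, FS R p β V B y y y k x)
      = Real.exp (-β * B x y) * Zunr R p β V x y := by
    rw [hZ, ← mul_assoc, ← Real.exp_add, show -β * B x y + β * B x y = 0 from by ring,
      Real.exp_zero, one_mul]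
  rw [hQS, hQB, hWxi, hSCval]
  have hZne : Zunr R p β V x y ≠ 0 := ne_of_gt hZpos
  field_simp


end
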